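/- For any intuitionistic Kripke model M = ⟨W,R,V⟩, any world w ∈ W, and standard formulas φ, ψ, truth at w satisfies the standard intuitionistic Kripke clauses: M,w ⊨ p iff V(w,p)=1; M,w ⊭ ⊥; M,w ⊨ φ∧ψ iff M,w ⊨ φ and M,w ⊨ ψ; M,w ⊨ φ∨ψ iff M,w ⊨ φ or M,w ⊨ ψ; M,w ⊨ φ→ψ iff for all v ∈ R[w], M,v ⊨ φ implies M,v ⊨ ψ. -/
import Mathlib


/-- Formulas of the language L: atoms, ⊥, ∧, ∨, →, and inquisitive disjunction ⩾. -/
inductive Formula (P : Type) : Type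
  | atom : P → Formula P
  | bot  : Formula P
  | and  : Formula P → Formula P → Formula P
  | or   : Formula P → Formula P → Formula P
  | impl : Formula P → Formula P → Formula P
  | iorr : Formula P → Formula P → Formula P

namespace Formula

/-- Negation ¬φ := φ → ⊥. -/
def neg {P : Type} (φ : Formula P) : Formula P := Formula.impl φ Formula.bot

/-- Polar question ?φ := φ ⩾ ¬φ. -/
def question {P : Type} (φ : Formula P) : Formula P := Formula.iorr φ φ.neg

/-- A standard formula contains no occurrence of inquisitive disjunction ⩾. -/
def standard {P : Type} : Formula P → Prop
  | atom _ => True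
  | bot => True
  | and φ ψ => φ.standard ∧ ψ.standard
  | or φ ψ => φ.standard ∧ ψ.standard
  | impl φ ψ => φ.standard ∧ ψ.standard
  | iorr _ _ => False

end Formula

/-- An intuitionistic Kripke model: a partially ordered set of worlds with a
persistent valuation. -/
structure KripkeModel (P : Type) where
  W : Type
  R : W → W → Prop
  refl : ∀ w, R w w
  antisymm : ∀ w v, R w v → R v w → w = v
  trans : ∀ w v u, R w v → R v u → R w u
  V : W → P → Prop
  persistent : ∀ w v p, R w v → V w p → V v p

/-- R[t], the up-set generated by a team t. -/
def KripkeModel.upset {P : Type} (M : KripkeModel P) (t : Set M.W) : Set M.W :=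
  {v | ∃ w ∈ t, M.R w v}

/-- The support relation M,t ⊨ φ between teams and formulas. -/
def support {P : Type} (M : KripkeModel P) : Formula P → Set M.W → Prop
  | .atom p, t => ∀ w ∈ t, M.V w p
  | .bot, t => t = ∅
  | .and φ ψ, t => support M φ t ∧ support M ψ t
  | .or φ ψ, t => ∃ t₁ t₂, t = t₁ ∪ t₂ ∧ support M φ t₁ ∧ support M ψ t₂
  | .impl φ ψ, t => ∀ t', t' ⊆ M.upset t → support M φ t' → support M ψ t'
  | .iorr φ ψ, t => support M φ t ∨ support M ψ t

/-- Truth at a world: M,w ⊨ φ iff M,{w} ⊨ φ. -/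
def truth {P : Type} (M : KripkeModel P) (w : M.W) (φ : Formula P) : Prop :=
  support M φ {w}

/-- A formula is truth-conditional if support at a team amounts to truth at each world. -/
def truthConditional {P : Type} (φ : Formula P) : Prop :=
  ∀ (M : KripkeModel P) (t : Set M.W), support M φ t ↔ ∀ w ∈ t, truth M w φ

/-- The partial truth-value function: `tvalIs M w φ b` says T(w,φ) is defined with value b
(b = true for value 1, i.e. M,w ⊨ φ; b = false for value 0, i.e. M,w ⊨ ¬φ). -/
def tvalIs {P : Type} (M : KripkeModel P) (w : M.W) (φ : Formula P) : Bool → Prop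
  | true => truth M w φ
  | false => truth M w φ.neg


lemma support_empty {P : Type} (M : KripkeModel P) (φ : Formula P) :
    support M φ (∅ : Set M.W) := by
  induction φ with
  | atom p => intro w hw; exact absurd hw (Set.notMem_empty w)
  | bot => rfl
  | and φ ψ ihφ ihψ => exact ⟨ihφ, ihψ⟩
  | or φ ψ ihφ ihψ => exact ⟨∅, ∅, by simp, ihφ, ihψ⟩
  | impl φ ψ ihφ ihψ =>
    intro t' ht' _
    have ht : t' = ∅ := by
      apply Set.eq_empty_of_subset_empty
      intro v hv
      obtain ⟨u, hu, _⟩ := ht' hv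
      exact absurd hu (Set.notMem_empty u)
    subst ht; exact ihψ
  | iorr φ ψ ihφ _ => exact Or.inl ihφ

lemma support_mono {P : Type} (M : KripkeModel P) (φ : Formula P) {t t' : Set M.W}
    (hsub : t' ⊆ t) (h : support M φ t) : support M φ t' := by
  induction φ generalizing t t' with
  | atom p => intro x hx; exact h x (hsub hx)
  | bot => subst h; exact Set.eq_empty_of_subset_empty hsub
  | and φ ψ ihφ ihψ => exact ⟨ihφ hsub h.1, ihψ hsub h.2⟩
  | or φ ψ ihφ ihψ =>
    obtain ⟨t₁, t₂, ht, h₁, h₂⟩ := h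
    refine ⟨t₁ ∩ t', t₂ ∩ t', ?_, ihφ Set.inter_subset_left h₁,
      ihψ Set.inter_subset_left h₂⟩
    rw [← Set.union_inter_distrib_right, ← ht]
    exact (Set.inter_eq_right.mpr hsub).symm
  | impl φ ψ ihφ ihψ =>
    intro s hs hsφ
    apply h s _ hsφ
    intro v hv
    obtain ⟨u, hu, hru⟩ := hs hv
    exact ⟨u, hsub hu, hru⟩
  | iorr φ ψ ihφ ihψ =>
    rcases h with h | h
    · exact Or.inl (ihφ hsub h)
    · exact Or.inr (ihψ hsub h)

lemma support_of_pointwise {P : Type} (M : KripkeModel P) :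
    ∀ (φ : Formula P), φ.standard → ∀ t : Set M.W,
      (∀ w ∈ t, support M φ {w}) → support M φ t := by
  intro φ
  induction φ with
  | atom p => intro _ t h x hx; exact h x hx x rfl
  | bot =>
    intro _ t h
    show t = ∅
    rw [Set.eq_empty_iff_forall_notMem]
    intro x hx
    exact Set.singleton_ne_empty x (h x hx)
  | and φ ψ ihφ ihψ =>
    intro hstd t h
    exact ⟨ihφ hstd.1 t (fun x hx => (h x hx).1), ihψ hstd.2 t (fun x hx => (h x hx).2)⟩
  | or φ ψ ihφ ihψ =>
    intro hstd t h
    refine ⟨{x ∈ t | support M φ {x}}, {x ∈ t | support M ψ {x}}, ?_, ?_, ?_⟩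
    · ext x
      simp only [Set.mem_union, Set.mem_setOf_eq]
      constructor
      · intro hx
        obtain ⟨t₁, t₂, ht, h₁, h₂⟩ := h x hx
        have hx' : x ∈ t₁ ∪ t₂ := ht ▸ rfl
        rcases hx' with hx1 | hx2
        · exact Or.inl ⟨hx, support_mono M φ (Set.singleton_subset_iff.mpr hx1) h₁⟩
        · exact Or.inr ⟨hx, support_mono M ψ (Set.singleton_subset_iff.mpr hx2) h₂⟩
      · rintro (⟨hx, _⟩ | ⟨hx, _⟩) <;> exact hx
    · exact ihφ hstd.1 _ (fun x hx => hx.2)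
    · exact ihψ hstd.2 _ (fun x hx => hx.2)
  | impl φ ψ ihφ ihψ =>
    intro hstd t h s hs hsφ
    apply ihψ hstd.2 s
    intro v hv
    obtain ⟨u, hu, hru⟩ := hs hv
    apply h u hu {v}
    · intro x hx
      rcases hx with rfl
      exact ⟨u, rfl, hru⟩
    · exact support_mono M φ (Set.singleton_subset_iff.mpr hv) hsφ
  | iorr φ ψ ihφ ihψ => intro hstd; exact absurd hstd id

/-- truth at a world satisfies the standard intuitionistic Kripke clauses
for standard formulas. -/
theorem kripke_semantics_recovered {P : Type} (M : KripkeModel P) (w : M.W)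
    (φ ψ : Formula P) (hφ : φ.standard) (hψ : ψ.standard) :
    (∀ p : P, truth M w (Formula.atom p) ↔ M.V w p) ∧
    (¬ truth M w Formula.bot) ∧
    (truth M w (Formula.and φ ψ) ↔ truth M w φ ∧ truth M w ψ) ∧
    (truth M w (Formula.or φ ψ) ↔ truth M w φ ∨ truth M w ψ) ∧
    (truth M w (Formula.impl φ ψ) ↔ ∀ v, M.R w v → truth M v φ → truth M v ψ) := by
  refine ⟨fun p => ?_, ?_, Iff.rfl, ?_, ?_⟩
  · constructor
    · intro h; exact h w rfl
    · intro h x hx; rcases hx with rfl; exact h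
  · intro h
    exact Set.singleton_ne_empty w h
  · constructor
    · rintro ⟨t₁, t₂, ht, h₁, h₂⟩
      have hw : w ∈ t₁ ∪ t₂ := ht ▸ rfl
      rcases hw with hw | hw
      · exact Or.inl (support_mono M φ (Set.singleton_subset_iff.mpr hw) h₁)
      · exact Or.inr (support_mono M ψ (Set.singleton_subset_iff.mpr hw) h₂)
    · rintro (h | h)
      · exact ⟨{w}, ∅, by simp, h, support_empty M ψ⟩
      · exact ⟨∅, {w}, by simp, support_empty M φ, h⟩
  · constructor
    · intro h v hRv hv
      apply h {v} _ hv
      intro x hx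
      rcases hx with rfl
      exact ⟨w, rfl, hRv⟩
    · intro h s hs hsφ
      apply support_of_pointwise M ψ hψ s
      intro v hv
      obtain ⟨u, hu, hru⟩ := hs hv
      rcases hu with rfl
      exact h v hru (support_mono M φ (Set.singleton_subset_iff.mpr hv) hsφ)
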